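/- Fix positive integers m, n and real M with 0 < M ≤ m·n and 4M ≤ (m+n)². Define l_SVD = M/(m+n+1) and l_ESVD = ((m+n) − sqrt((m+n)² − 4M))/2. Then l_ESVD > l_SVD. -/
import Mathlib

theorem stmt12 (m n : ℕ) (hm : 0 < m) (hn : 0 < n) (M : ℝ)
    (hM0 : 0 < M) (hMmn : M ≤ (m : ℝ) * n)
    (hM4 : 4 * M ≤ ((m : ℝ) + n) ^ 2) :
    M / ((m : ℝ) + n + 1) <
      (((m : ℝ) + n) - Real.sqrt (((m : ℝ) + n) ^ 2 - 4 * M)) / 2 := by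
  have hm1 : (1:ℝ) ≤ m := by exact_mod_cast hm
  have hn1 : (1:ℝ) ≤ n := by exact_mod_cast hn
  set s : ℝ := (m:ℝ) + n with hs
  have hs2 : (2:ℝ) ≤ s := by linarith
  have hpos : 0 < s + 1 := by linarith
  rw [div_lt_div_iff₀ hpos (by norm_num : (0:ℝ) < 2)]
  have key : Real.sqrt (s ^ 2 - 4 * M) < s - 2 * M / (s + 1) := by
    have hy : 0 < s - 2 * M / (s + 1) := by
      rw [sub_pos, div_lt_iff₀ hpos]
      nlinarith
    rw [Real.sqrt_lt' hy]
    have : (s - 2 * M / (s + 1)) ^ 2 = s ^ 2 - 4 * M * s / (s + 1) + 4 * M ^ 2 / (s + 1) ^ 2 := by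
      field_simp; ring
    rw [this]
    have h1 : 4 * M * s / (s + 1) < 4 * M := by
      rw [div_lt_iff₀ hpos]; nlinarith
    have h2 : 0 < 4 * M ^ 2 / (s + 1) ^ 2 := by positivity
    linarith
  have hc : 2 * M / (s + 1) * (s + 1) = 2 * M := by field_simp
  have h3 := mul_lt_mul_of_pos_right key hpos
  rw [sub_mul, hc] at h3
  rw [sub_mul]
  linarith
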